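/- Let W_α be a bounded unilateral weighted shift with positive weights (α_j)_{j≥0}. If W_α² is quasinormal, then the weight sequence α is periodic with period at most 2, i.e., α_{j+2} = α_j for all j ≥ 0. -/

import Mathlib

noncomputable section

/-- The standard basis vectors of `ℓ²(ℕ)`. -/
def e (j : ℕ) : lp (fun _ : ℕ => ℂ) 2 := lp.single 2 j 1

/-- Purely arithmetic part: if a bounded positive sequence satisfies
`α (j+2) * α (j+3) = α j * α (j+1)` for all `j`, then it is 2-periodic. -/
lemma aux_arith (α : ℕ → ℝ) (hpos : ∀ j, 0 < α j) (M : ℝ)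
    (hb : ∀ i, α i ≤ M)
    (hbeta : ∀ j, α (j+2) * α (j+3) = α j * α (j+1)) :
    ∀ j, α (j+2) = α j := by
  -- each parity class is geometric
  have hgeo : ∀ j : ℕ, α j * α (j+4) = α (j+2) * α (j+2) := by
    intro j
    have h1 := hbeta j
    have h2 := hbeta (j+1)
    have e1 : j + 1 + 2 = j + 3 := by ring
    have e2 : j + 1 + 3 = j + 4 := by ring
    have e3 : j + 1 + 1 = j + 2 := by ring
    rw [e1, e2, e3] at h2
    have key : α (j+1) * (α j * α (j+4)) = α (j+1) * (α (j+2) * α (j+2)) := by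
      linear_combination α (j+2) * h2 - α (j+4) * h1
    exact mul_left_cancel₀ (hpos (j+1)).ne' key
  have hstep : ∀ j k : ℕ, α (j + 2*(k+1)) * α j = α (j + 2*k) * α (j+2) := by
    intro j k
    induction k with
    | zero => simp [mul_comm]
    | succ n ih =>
      have hg := hgeo (j + 2*n)
      have e1 : j + 2*n + 4 = j + 2*(n+1+1) := by ring
      have e2 : j + 2*n + 2 = j + 2*(n+1) := by ring
      rw [e1, e2] at hg
      have h0 := hpos (j + 2*n)
      have key : α (j + 2*n) * (α (j + 2*(n+1+1)) * α j)
          = α (j + 2*n) * (α (j + 2*(n+1)) * α (j+2)) := by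
        linear_combination α j * hg + α (j + 2*(n+1)) * ih
      exact mul_left_cancel₀ h0.ne' key
  have hpow : ∀ j k : ℕ, α (j + 2*k) * (α j)^k = α j * (α (j+2))^k := by
    intro j k
    induction k with
    | zero => simp
    | succ n ih =>
      have hs := hstep j n
      calc α (j + 2*(n+1)) * (α j)^(n+1)
          = (α (j + 2*(n+1)) * α j) * (α j)^n := by rw [pow_succ]; ring
        _ = (α (j + 2*n) * α (j+2)) * (α j)^n := by rw [hs]
        _ = (α (j + 2*n) * (α j)^n) * α (j+2) := by ring
        _ = (α j * (α (j+2))^n) * α (j+2) := by rw [ih]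
        _ = α j * (α (j+2))^(n+1) := by rw [pow_succ]; ring
  -- no parity class can grow
  have hle : ∀ j : ℕ, α (j+2) ≤ α j := by
    intro j
    by_contra h
    push_neg at h
    have hαj := hpos j
    have hρ : 1 < α (j+2) / α j := (one_lt_div hαj).mpr h
    obtain ⟨k, hk⟩ := pow_unbounded_of_one_lt (M / α j) hρ
    have hb' := hb (j + 2*k)
    have hp := hpow j k
    have hαjk : (0:ℝ) < (α j)^k := pow_pos hαj k
    have hαj2k : (0:ℝ) < (α (j+2))^k := pow_pos (hpos (j+2)) k
    rw [div_pow] at hk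
    -- hk : M / α j < (α (j+2))^k / (α j)^k
    have h1 : M * (α j)^k < α j * (α (j+2))^k := by
      rw [div_lt_div_iff₀ hαj hαjk] at hk
      nlinarith [hk]
    have h2 : α j * (α (j+2))^k ≤ M * (α j)^k := by
      rw [← hp]
      have := hpos (j + 2*k)
      nlinarith [hb', hαjk]
    linarith
  intro j
  have h1 := hle j
  have h2 := hle (j+1)
  have e1 : j + 1 + 2 = j + 3 := by ring
  rw [e1] at h2
  have hbj := hbeta j
  have p0 := hpos j
  have p1 := hpos (j+1)
  have p2 := hpos (j+2)
  have p3 := hpos (j+3)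
  nlinarith [hbj, h1, h2]

/-- If `W_α` is a bounded unilateral weighted shift with positive weights and `W_α²` is
quasinormal, then the weight sequence is periodic with period at most 2. -/
theorem weights_periodic_of_sq_quasinormal
    (α : ℕ → ℝ) (hpos : ∀ j, 0 < α j)
    (W : lp (fun _ : ℕ => ℂ) 2 →L[ℂ] lp (fun _ : ℕ => ℂ) 2)
    (hW : ∀ j : ℕ, W (e j) = (α j : ℂ) • e (j + 1))
    (hq : W ^ 2 * (star (W ^ 2) * W ^ 2) = (star (W ^ 2) * W ^ 2) * W ^ 2) :
    ∀ j : ℕ, α (j + 2) = α j := by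
  have hnorm_e : ∀ j, ‖e j‖ = 1 := by
    intro j
    have := lp.norm_single (p := 2) (E := fun _ : ℕ => ℂ) (by norm_num) j (1:ℂ)
    simpa [e] using this
  have he_ne : ∀ j, e j ≠ 0 := by
    intro j h
    have := hnorm_e j
    rw [h, norm_zero] at this
    norm_num at this
  have coord : ∀ (f : lp (fun _ : ℕ => ℂ) 2) (k : ℕ), f k = (inner ℂ (e k) f : ℂ) := by
    intro f k; rw [e, lp.inner_single_left]; simp
  have hinner : ∀ a b : ℕ, (inner ℂ (e a) (e b) : ℂ) = if a = b then 1 else 0 := by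
    intro a b; rw [e, lp.inner_single_left]; simp [e, lp.single_apply, Pi.single_apply, eq_comm]
  set A := W ^ 2 with hAdef
  have hA : ∀ j : ℕ, A (e j) = ((α j * α (j+1) : ℝ) : ℂ) • e (j + 2) := by
    intro j
    have h1 : A (e j) = W (W (e j)) := by rw [hAdef, pow_two, ContinuousLinearMap.mul_apply]
    rw [h1, hW j, map_smul, hW (j+1), smul_smul]
    push_cast
    ring_nf
  have hAdjA : ∀ j : ℕ, (star A) (A (e j)) = (((α j * α (j+1))^2 : ℝ) : ℂ) • e j := by
    intro j
    apply lp.ext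
    funext k
    rw [coord ((star A) (A (e j))) k, ContinuousLinearMap.star_eq_adjoint,
      ContinuousLinearMap.adjoint_inner_right, hA j, hA k]
    rw [inner_smul_left, inner_smul_right, hinner]
    have h1 : ((((α j * α (j+1))^2 : ℝ) : ℂ) • e j) k
        = (((α j * α (j+1))^2 : ℝ) : ℂ) * (e j) k := rfl
    rw [h1, coord (e j) k, hinner]
    by_cases h : k = j
    · subst h; simp; ring
    · simp [h]
  have hbeta : ∀ j : ℕ, α (j+2) * α (j+3) = α j * α (j+1) := by
    intro j
    have h := congrArg (fun T : lp (fun _ : ℕ => ℂ) 2 →L[ℂ] lp (fun _ : ℕ => ℂ) 2 => T (e j)) hq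
    simp only [ContinuousLinearMap.mul_apply] at h
    have hL : A ((star A) (A (e j)))
        = ((((α j * α (j+1))^2 : ℝ) : ℂ) * ((α j * α (j+1) : ℝ) : ℂ)) • e (j + 2) := by
      rw [hAdjA j, map_smul, hA j, smul_smul]
    have hR : (star A) (A (A (e j)))
        = (((α j * α (j+1) : ℝ) : ℂ) * (((α (j+2) * α (j+3))^2 : ℝ) : ℂ)) • e (j + 2) := by
      rw [hA j, map_smul, map_smul, hAdjA (j+2)]
      rw [smul_smul]
    rw [hL, hR] at h
    have hcoef := smul_left_injective ℂ (he_ne (j+2)) h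
    have hre : (α j * α (j+1))^2 * (α j * α (j+1))
        = (α j * α (j+1)) * (α (j+2) * α (j+3))^2 := by
      exact_mod_cast hcoef
    have hβpos : 0 < α j * α (j+1) := mul_pos (hpos j) (hpos (j+1))
    have hβpos2 : 0 < α (j+2) * α (j+3) := mul_pos (hpos (j+2)) (hpos (j+3))
    have hsq : (α j * α (j+1))^2 = (α (j+2) * α (j+3))^2 :=
      mul_left_cancel₀ hβpos.ne' (by linear_combination hre)
    clear h hL hR hcoef hq hA hAdjA hre
    nlinarith [hsq, hβpos, hβpos2]
  have hbound : ∀ i : ℕ, α i ≤ ‖W‖ := by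
    intro i
    have h1 : ‖W (e i)‖ ≤ ‖W‖ * ‖e i‖ := W.le_opNorm (e i)
    rw [hW i, norm_smul, hnorm_e (i+1), hnorm_e i, mul_one, mul_one] at h1
    calc α i ≤ |α i| := le_abs_self _
      _ = ‖(α i : ℂ)‖ := by rw [Complex.norm_real, Real.norm_eq_abs]
      _ ≤ ‖W‖ := h1
  exact aux_arith α hpos ‖W‖ hbound hbeta
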